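/- arXiv:1711.01491 — 2 statements merged into one kernel-verified Lean document; each statement's English description precedes it below -/
import Mathlib

section
/- Let s ∈ (0,1), θ₀, r₀ > 0 with r₀ ≤ 1, and let K satisfy K(r) ≥ θ₀|r|^{−1−2s} for |r| ≤ r₀ and K ≥ 0, K even. Let P : ℝ → ℝ be the gluing function from the previous context: P Lipschitz with constant ρ on (x₁, x₂), constant equal to ζ₂ on (x₁+1, x₂−1), with |P(x) − P(y)| ≤ 2ρ for x, y ∈ (x₁, x₂), and suppose also K(r) ≤ Θ₀|r|^{−1−2s} for all r. Then ∬_{(x₁,x₂)²} |P(x)−P(y)|² K(x−y) dx dy ≤ κ ρ², where κ depends only on Θ₀ and s (not on x₂ − x₁). -/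
open MeasureTheory Set
open Real

noncomputable def gaux (s t : ℝ) : ℝ :=
  if t ≤ 1 then t ^ (1 - 2*s) else 4 * t ^ (-(1 + 2*s))

noncomputable def haux (s r : ℝ) : ℝ := gaux s |r|

lemma haux_nonneg (s r : ℝ) : 0 ≤ haux s r := by
  unfold haux gaux; split_ifs <;> positivity

lemma haux_meas (s : ℝ) : Measurable (haux s) := by
  unfold haux gaux
  apply Measurable.comp (g := fun t : ℝ => if t ≤ 1 then t ^ (1 - 2*s) else 4 * t ^ (-(1 + 2*s)))
    _ measurable_abs
  apply Measurable.ite (measurableSet_le measurable_id measurable_const) <;> fun_prop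

section
variable {s : ℝ}

lemma gaux_intOn_Ioc (hs1 : s < 1) : IntegrableOn (gaux s) (Ioc (0:ℝ) 1) := by
  have hp : (-1:ℝ) < 1 - 2*s := by linarith
  have h1 : IntegrableOn (fun t : ℝ => t ^ (1 - 2*s)) (Ioc (0:ℝ) 1) := by
    have := intervalIntegral.intervalIntegrable_rpow' (a := 0) (b := 1) hp
    rwa [intervalIntegrable_iff_integrableOn_Ioc_of_le zero_le_one] at this
  exact h1.congr_fun (fun t ht => by simp [gaux, ht.2]) measurableSet_Ioc

lemma gaux_intOn_Ioi (hs0 : 0 < s) : IntegrableOn (gaux s) (Ioi (1:ℝ)) := by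
  have hq : -(1 + 2*s) < -1 := by linarith
  have h1 : IntegrableOn (fun t : ℝ => 4 * t ^ (-(1 + 2*s))) (Ioi (1:ℝ)) :=
    (integrableOn_Ioi_rpow_of_lt hq one_pos).const_mul 4
  exact h1.congr_fun (fun t ht => by simp [gaux, not_le.mpr (mem_Ioi.mp ht)]) measurableSet_Ioi

lemma gaux_intOn (hs0 : 0 < s) (hs1 : s < 1) : IntegrableOn (gaux s) (Ioi (0:ℝ)) := by
  have := (gaux_intOn_Ioc hs1).union (gaux_intOn_Ioi hs0)
  rwa [Ioc_union_Ioi_eq_Ioi zero_le_one] at this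

lemma gaux_integral (hs0 : 0 < s) (hs1 : s < 1) :
    ∫ t in Ioi (0:ℝ), gaux s t = 1/(2-2*s) + 2/s := by
  have hp : (-1:ℝ) < 1 - 2*s := by linarith
  have hq : -(1 + 2*s) < -1 := by linarith
  rw [← Ioc_union_Ioi_eq_Ioi (zero_le_one' ℝ),
    setIntegral_union (Ioc_disjoint_Ioi le_rfl) measurableSet_Ioi
      (gaux_intOn_Ioc hs1) (gaux_intOn_Ioi hs0)]
  have e1 : ∫ t in Ioc (0:ℝ) 1, gaux s t = 1/(2-2*s) := by
    rw [setIntegral_congr_fun (g := fun t : ℝ => t ^ (1 - 2*s)) measurableSet_Ioc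
      (fun t (ht : t ∈ Ioc (0:ℝ) 1) => by simp [gaux, ht.2])]
    rw [← intervalIntegral.integral_of_le zero_le_one, integral_rpow (Or.inl hp)]
    rw [Real.one_rpow, Real.zero_rpow (by intro h; linarith [h])]
    have : 1 - 2*s + 1 = 2 - 2*s := by ring
    rw [this]
    ring
  have e2 : ∫ t in Ioi (1:ℝ), gaux s t = 2/s := by
    rw [setIntegral_congr_fun (g := fun t : ℝ => 4 * t ^ (-(1 + 2*s))) measurableSet_Ioi
      (fun t (ht : t ∈ Ioi (1:ℝ)) => by simp [gaux, not_le.mpr (mem_Ioi.mp ht)])]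
    rw [integral_const_mul, integral_Ioi_rpow_of_lt hq one_pos, Real.one_rpow]
    have hs' : -(1 + 2*s) + 1 = -(2*s) := by ring
    rw [hs']
    field_simp
    ring
  rw [e1, e2]

lemma haux_eq_on_Ioi (t : ℝ) (ht : t ∈ Ioi (0:ℝ)) : haux s t = gaux s t := by
  unfold haux; rw [abs_of_pos (mem_Ioi.mp ht)]

lemma haux_integrable (hs0 : 0 < s) (hs1 : s < 1) : Integrable (haux s) := by
  have hf : IntegrableOn (haux s) (Ioi (0:ℝ)) :=
    ((gaux_intOn hs0 hs1).congr_fun (fun t ht => (haux_eq_on_Ioi t ht).symm) measurableSet_Ioi)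
  have int_Iic : IntegrableOn (fun x => gaux s |x|) (Iic (0:ℝ)) := by
    rw [IntegrableOn, ← Measure.map_neg_eq_self (volume : Measure ℝ)]
    have m : MeasurableEmbedding fun x : ℝ => -x := (Homeomorph.neg ℝ).measurableEmbedding
    rw [← IntegrableOn, m.integrableOn_map_iff]
    simp_rw [Function.comp_def, abs_neg, neg_preimage, neg_Iic, neg_zero]
    exact Iff.mpr integrableOn_Ici_iff_integrableOn_Ioi hf
  have := int_Iic.union hf
  rwa [Iic_union_Ioi, integrableOn_univ] at this

lemma haux_integral (hs0 : 0 < s) (hs1 : s < 1) :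
    ∫ r, haux s r = 2 * (1/(2-2*s) + 2/s) := by
  have : ∫ r, haux s r = ∫ r : ℝ, gaux s |r| := rfl
  rw [this, integral_comp_abs, ← gaux_integral hs0 hs1]

end

section
variable {s : ℝ}

lemma haux_shift_integrable (hs0 : 0 < s) (hs1 : s < 1) (x : ℝ) :
    Integrable (fun y => haux s (x - y)) :=
  (haux_integrable hs0 hs1).comp_sub_left x

lemma haux_shift_setIntegral_le (hs0 : 0 < s) (hs1 : s < 1) (x : ℝ) (S : Set ℝ) :
    ∫ y in S, haux s (x - y) ≤ 2*(1/(2-2*s) + 2/s) := by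
  calc ∫ y in S, haux s (x - y) ≤ ∫ y, haux s (x - y) :=
        setIntegral_le_integral (haux_shift_integrable hs0 hs1 x)
          (Filter.Eventually.of_forall fun y => haux_nonneg s _)
    _ = ∫ r, haux s r := integral_sub_left_eq_self _ _ x
    _ = 2*(1/(2-2*s) + 2/s) := haux_integral hs0 hs1

noncomputable def Faux (s t : ℝ) : ℝ :=
  (Ioi (1:ℝ)).indicator (fun u => 4 * u ^ (-(1 + 2*s))) t

lemma Faux_nonneg (s t : ℝ) : 0 ≤ Faux s t :=
  Set.indicator_nonneg (fun u hu => by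
    have h1 : (0:ℝ) < u := lt_trans one_pos hu
    positivity) t

lemma Faux_integrable (hs0 : 0 < s) : Integrable (Faux s) := by
  have hq : -(1 + 2*s) < -1 := by linarith
  unfold Faux
  rw [integrable_indicator_iff measurableSet_Ioi]
  exact (integrableOn_Ioi_rpow_of_lt hq one_pos).const_mul 4

lemma Faux_integral (hs0 : 0 < s) : ∫ t, Faux s t = 2/s := by
  have hq : -(1 + 2*s) < -1 := by linarith
  unfold Faux
  rw [integral_indicator measurableSet_Ioi, integral_const_mul,
    integral_Ioi_rpow_of_lt hq one_pos, Real.one_rpow]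
  have : -(1 + 2*s) + 1 = -(2*s) := by ring
  rw [this]
  field_simp
  ring

lemma Faux_eval {t : ℝ} (ht : 1 < t) : Faux s t = 4 * t ^ (-(1 + 2*s)) :=
  Set.indicator_of_mem ht _

lemma haux_le_Faux {c r : ℝ} (hs0 : 0 < s) (hc : 1 < c) (h : c ≤ |r|) : haux s r ≤ Faux s c := by
  rw [Faux_eval hc]
  unfold haux gaux
  rw [if_neg (by push_neg; linarith)]
  have : |r| ^ (-(1 + 2*s)) ≤ c ^ (-(1 + 2*s)) :=
    Real.rpow_le_rpow_of_nonpos (by linarith) h (by linarith)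
  linarith

end

/-- Energy of the glued function: if `P` is `ρ`-Lipschitz on `(x₁,x₂)`, constant equal to `ζ₂`
on `(x₁+1, x₂-1)`, with oscillation at most `2ρ` on `(x₁,x₂)`, and the kernel `K` is even,
nonnegative, bounded as `θ₀|r|^{-1-2s}χ_{|r|≤r₀} ≤ K(r) ≤ Θ₀|r|^{-1-2s}`, then
`∬_{(x₁,x₂)²} |P(x)-P(y)|² K(x-y) dx dy ≤ κ ρ²`, where `κ` depends only on `Θ₀` and `s`
(not on `x₂ - x₁`). -/
theorem stmt_14 (s Θ₀ : ℝ) (hs : s ∈ Set.Ioo (0:ℝ) 1) (hΘ₀ : 0 < Θ₀) :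
    ∃ κ > 0, ∀ (θ₀ r₀ ρ ζ₂ x₁ x₂ : ℝ) (K P : ℝ → ℝ),
      0 < θ₀ → 0 < r₀ → r₀ ≤ 1 → 0 < ρ → x₁ + 4 ≤ x₂ →
      (∀ r, K (-r) = K r) → (∀ r, 0 ≤ K r) →
      (∀ r, r ≠ 0 → |r| ≤ r₀ → θ₀ * |r| ^ (-(1 + 2 * s)) ≤ K r) →
      (∀ r, r ≠ 0 → K r ≤ Θ₀ * |r| ^ (-(1 + 2 * s))) →
      (∀ x ∈ Set.Ioo x₁ x₂, ∀ y ∈ Set.Ioo x₁ x₂, |P x - P y| ≤ ρ * |x - y|) →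
      (∀ x ∈ Set.Ioo (x₁ + 1) (x₂ - 1), P x = ζ₂) →
      (∀ x ∈ Set.Ioo x₁ x₂, ∀ y ∈ Set.Ioo x₁ x₂, |P x - P y| ≤ 2 * ρ) →
      (∫ x in Set.Ioo x₁ x₂, ∫ y in Set.Ioo x₁ x₂, (P x - P y) ^ 2 * K (x - y)) ≤ κ * ρ ^ 2 := by
  obtain ⟨hs0, hs1⟩ := hs
  have h22 : (0:ℝ) < 2 - 2*s := by linarith
  set C₀ : ℝ := 2*(1/(2-2*s) + 2/s) with hC₀def
  have hC₀pos : 0 < C₀ := by positivity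
  refine ⟨Θ₀ * (6*C₀ + 4/s), by positivity, ?_⟩
  intro θ₀ r₀ ρ ζ₂ x₁ x₂ K P hθ₀ hr₀ hr₀1 hρ hx hKsymm hKnn hKlow hKup hLip hconst hosc
  set I : Set ℝ := Set.Ioo x₁ x₂ with hIdef
  have hImeas : MeasurableSet I := measurableSet_Ioo
  set B : Set ℝ := Iic (x₁+1) ∪ Ici (x₂-1) with hBdef
  have hBmeas : MeasurableSet B := measurableSet_Iic.union measurableSet_Ici
  set e : ℝ → ℝ := B.indicator (fun _ => 1) with hedef
  have he_nonneg : ∀ z, 0 ≤ e z := fun z => Set.indicator_nonneg (fun _ _ => zero_le_one) z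
  -- key pointwise bound
  have key : ∀ x ∈ I, ∀ y ∈ I,
      (P x - P y)^2 * K (x - y) ≤ Θ₀ * ρ^2 * ((e x + e y) * haux s (x - y)) := by
    intro x hx y hy
    by_cases hxy : x ∈ B ∨ y ∈ B
    · have he1 : 1 ≤ e x + e y := by
        rcases hxy with h | h
        · have h1 : e x = 1 := Set.indicator_of_mem h _
          have := he_nonneg y; linarith
        · have h1 : e y = 1 := Set.indicator_of_mem h _
          have := he_nonneg x; linarith
      have base : (P x - P y)^2 * K (x - y) ≤ Θ₀ * ρ^2 * haux s (x - y) := by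
        rcases eq_or_ne (x - y) 0 with h0 | h0
        · have hxy' : x = y := sub_eq_zero.mp h0
          subst hxy'
          simp only [sub_self]
          norm_num
          exact mul_nonneg (by positivity) (haux_nonneg s 0)
        · have habs : 0 < |x - y| := abs_pos.mpr h0
          have hK := hKup _ h0
          have hP2 : (P x - P y)^2 = |P x - P y|^2 := (sq_abs _).symm
          by_cases hle : |x - y| ≤ 1
          · have h1 : |P x - P y| ≤ ρ * |x - y| := hLip x hx y hy
            have hhaux : haux s (x - y) = |x - y| ^ (1 - 2*s) := by
              unfold haux gaux; rw [if_pos hle]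
            have hsq : |P x - P y|^2 ≤ (ρ * |x - y|)^2 :=
              pow_le_pow_left₀ (abs_nonneg _) h1 2
            have hrw : |x - y|^2 * |x - y| ^ (-(1 + 2*s)) = |x - y| ^ (1 - 2*s) := by
              rw [← Real.rpow_natCast |x - y| 2, ← Real.rpow_add habs]
              congr 1
              push_cast
              ring
            calc (P x - P y)^2 * K (x - y)
                ≤ (ρ * |x - y|)^2 * (Θ₀ * |x - y| ^ (-(1 + 2*s))) := by
                  rw [hP2]
                  exact mul_le_mul hsq hK (hKnn _) (by positivity)
              _ = Θ₀ * ρ^2 * (|x - y|^2 * |x - y| ^ (-(1 + 2*s))) := by ring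
              _ = Θ₀ * ρ^2 * haux s (x - y) := by rw [hrw, hhaux]
          · push_neg at hle
            have h1 : |P x - P y| ≤ 2 * ρ := hosc x hx y hy
            have hhaux : haux s (x - y) = 4 * |x - y| ^ (-(1 + 2*s)) := by
              unfold haux gaux; rw [if_neg (not_le.mpr hle)]
            have hsq : |P x - P y|^2 ≤ (2*ρ)^2 := pow_le_pow_left₀ (abs_nonneg _) h1 2
            calc (P x - P y)^2 * K (x - y)
                ≤ (2*ρ)^2 * (Θ₀ * |x - y| ^ (-(1 + 2*s))) := by
                  rw [hP2]
                  exact mul_le_mul hsq hK (hKnn _) (by positivity)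
              _ = Θ₀ * ρ^2 * (4 * |x - y| ^ (-(1 + 2*s))) := by ring
              _ = Θ₀ * ρ^2 * haux s (x - y) := by rw [hhaux]
      calc (P x - P y)^2 * K (x - y) ≤ Θ₀ * ρ^2 * haux s (x - y) := base
        _ = Θ₀ * ρ^2 * (1 * haux s (x - y)) := by ring
        _ ≤ Θ₀ * ρ^2 * ((e x + e y) * haux s (x - y)) := by
            apply mul_le_mul_of_nonneg_left _ (by positivity)
            exact mul_le_mul_of_nonneg_right he1 (haux_nonneg s _)
    · push_neg at hxy
      obtain ⟨hxB, hyB⟩ := hxy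
      rw [hBdef] at hxB hyB
      simp only [Set.mem_union, Set.mem_Iic, Set.mem_Ici, not_or, not_le] at hxB hyB
      have hPx : P x = ζ₂ := hconst x ⟨hxB.1, hxB.2⟩
      have hPy : P y = ζ₂ := hconst y ⟨hyB.1, hyB.2⟩
      rw [hPx, hPy, sub_self]
      norm_num
      exact mul_nonneg (by positivity)
        (mul_nonneg (add_nonneg (he_nonneg x) (he_nonneg y)) (haux_nonneg s _))
  have hs_int : ∀ x : ℝ, Integrable (fun y => haux s (x - y)) := haux_shift_integrable hs0 hs1
  have hJdisj : Disjoint (Ioc x₁ (x₁+1)) (Ico (x₂-1) x₂) := by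
    apply Set.disjoint_left.mpr
    rintro z ⟨_, hz2⟩ ⟨hz3, _⟩
    linarith
  have hIB : I ∩ B = Ioc x₁ (x₁+1) ∪ Ico (x₂-1) x₂ := by
    ext z
    simp only [hIdef, hBdef, Set.mem_inter_iff, Set.mem_Ioo, Set.mem_union, Set.mem_Iic,
      Set.mem_Ici, Set.mem_Ioc, Set.mem_Ico]
    constructor
    · rintro ⟨⟨h1, h2⟩, h3 | h3⟩
      · exact Or.inl ⟨h1, h3⟩
      · exact Or.inr ⟨h3, h2⟩
    · rintro (⟨h1, h2⟩ | ⟨h1, h2⟩)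
      · exact ⟨⟨h1, by linarith⟩, Or.inl h2⟩
      · exact ⟨⟨by linarith, h2⟩, Or.inr h1⟩
  have innerB : ∀ x ∈ I, (∫ y in I, (P x - P y)^2 * K (x - y)) ≤
      Θ₀ * ρ^2 * (C₀ * e x + ((∫ y in Ioc x₁ (x₁+1), haux s (x - y))
        + (∫ y in Ico (x₂-1) x₂, haux s (x - y)))) := by
    intro x hx
    have hint1 : IntegrableOn (fun y => e x * haux s (x - y)) I :=
      ((hs_int x).const_mul _).integrableOn
    have hint2 : IntegrableOn (fun y => e y * haux s (x - y)) I := by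
      apply Integrable.bdd_mul (c := 1) (hs_int x).integrableOn
        ((measurable_const.indicator hBmeas).aestronglyMeasurable)
      refine Filter.Eventually.of_forall fun z => ?_
      rw [Real.norm_eq_abs]
      by_cases hzB : z ∈ B <;>
        simp [hedef, Set.indicator_of_mem, Set.indicator_of_notMem, hzB]
    have hsplit : (fun y => (Θ₀ * ρ^2) * ((e x + e y) * haux s (x - y)))
        = fun y => (Θ₀*ρ^2) * (e x * haux s (x - y)) + (Θ₀*ρ^2) * (e y * haux s (x - y)) := by
      funext y; ring
    have step1 : (∫ y in I, (P x - P y)^2 * K (x - y))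
        ≤ ∫ y in I, (Θ₀ * ρ^2) * ((e x + e y) * haux s (x - y)) := by
      apply integral_mono_of_nonneg
      · exact Filter.Eventually.of_forall fun y => mul_nonneg (sq_nonneg _) (hKnn _)
      · rw [hsplit]; exact (hint1.const_mul _).add (hint2.const_mul _)
      · filter_upwards [ae_restrict_mem hImeas] with y hy
        exact key x hx y hy
    have step2 : ∫ y in I, (Θ₀ * ρ^2) * ((e x + e y) * haux s (x - y))
        = (Θ₀*ρ^2) * (e x * ∫ y in I, haux s (x - y))
          + (Θ₀*ρ^2) * ∫ y in I, e y * haux s (x - y) := by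
      rw [hsplit, integral_add (hint1.const_mul _) (hint2.const_mul _),
        integral_const_mul, integral_const_mul, integral_const_mul]
    have hb1 : (∫ y in I, haux s (x - y)) ≤ C₀ := by
      rw [hC₀def]; exact haux_shift_setIntegral_le hs0 hs1 x I
    have hb2 : (∫ y in I, e y * haux s (x - y))
        = (∫ y in Ioc x₁ (x₁+1), haux s (x - y)) + ∫ y in Ico (x₂-1) x₂, haux s (x - y) := by
      have hind : (fun y => e y * haux s (x - y))
          = fun y => B.indicator (fun y => haux s (x - y)) y := by
        funext y
        by_cases hyB : y ∈ B <;>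
          simp [hedef, Set.indicator_of_mem, Set.indicator_of_notMem, hyB]
      rw [hind, setIntegral_indicator hBmeas, hIB,
        setIntegral_union hJdisj measurableSet_Ico (hs_int x).integrableOn
          (hs_int x).integrableOn]
    calc (∫ y in I, (P x - P y)^2 * K (x - y))
        ≤ ∫ y in I, (Θ₀ * ρ^2) * ((e x + e y) * haux s (x - y)) := step1
      _ = (Θ₀*ρ^2) * (e x * ∫ y in I, haux s (x - y))
          + (Θ₀*ρ^2) * ∫ y in I, e y * haux s (x - y) := step2
      _ ≤ Θ₀ * ρ^2 * (C₀ * e x + ((∫ y in Ioc x₁ (x₁+1), haux s (x - y))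
          + (∫ y in Ico (x₂-1) x₂, haux s (x - y)))) := by
        rw [hb2]
        nlinarith [mul_nonneg (mul_nonneg hΘ₀.le (sq_nonneg ρ))
          (mul_nonneg (he_nonneg x) (sub_nonneg.mpr hb1))]
  have hφ₁ : ∀ x ∈ I, (∫ y in Ioc x₁ (x₁+1), haux s (x - y))
      ≤ C₀ * (Ioc x₁ (x₁+2)).indicator (fun _ => 1) x + Faux s (x - (x₁+1)) := by
    intro x hx
    by_cases hc : x ≤ x₁ + 2
    · have h1 : (∫ y in Ioc x₁ (x₁+1), haux s (x - y)) ≤ C₀ := by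
        rw [hC₀def]; exact haux_shift_setIntegral_le hs0 hs1 x _
      have h2 : (Ioc x₁ (x₁+2)).indicator (fun _ => (1:ℝ)) x = 1 :=
        Set.indicator_of_mem (show x ∈ Ioc x₁ (x₁+2) from ⟨hx.1, hc⟩) _
      rw [h2]
      have := Faux_nonneg s (x - (x₁+1))
      linarith
    · push_neg at hc
      have h1lt : 1 < x - (x₁+1) := by linarith
      have h3 : (∫ y in Ioc x₁ (x₁+1), haux s (x - y))
          ≤ ∫ _y in Ioc x₁ (x₁+1), Faux s (x - (x₁+1)) := by
        apply setIntegral_mono_on (hs_int x).integrableOn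
          (integrableOn_const (by rw [Real.volume_Ioc]; exact ENNReal.ofReal_ne_top))
          measurableSet_Ioc
        intro y hy
        apply haux_le_Faux hs0 h1lt
        calc x - (x₁+1) ≤ x - y := by linarith [hy.2]
          _ ≤ |x - y| := le_abs_self _
      rw [setIntegral_const, Real.volume_real_Ioc_of_le (show x₁ ≤ x₁ + 1 by linarith),
        show x₁ + 1 - x₁ = 1 by ring, one_smul] at h3
      have h2 : 0 ≤ C₀ * (Ioc x₁ (x₁+2)).indicator (fun _ => (1:ℝ)) x :=
        mul_nonneg hC₀pos.le (Set.indicator_nonneg (fun _ _ => zero_le_one) x)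
      linarith
  have hφ₂ : ∀ x ∈ I, (∫ y in Ico (x₂-1) x₂, haux s (x - y))
      ≤ C₀ * (Ico (x₂-2) x₂).indicator (fun _ => 1) x + Faux s ((x₂-1) - x) := by
    intro x hx
    by_cases hc : x₂ - 2 ≤ x
    · have h1 : (∫ y in Ico (x₂-1) x₂, haux s (x - y)) ≤ C₀ := by
        rw [hC₀def]; exact haux_shift_setIntegral_le hs0 hs1 x _
      have h2 : (Ico (x₂-2) x₂).indicator (fun _ => (1:ℝ)) x = 1 :=
        Set.indicator_of_mem (show x ∈ Ico (x₂-2) x₂ from ⟨hc, hx.2⟩) _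
      rw [h2]
      have := Faux_nonneg s ((x₂-1) - x)
      linarith
    · push_neg at hc
      have h1lt : 1 < (x₂-1) - x := by linarith
      have h3 : (∫ y in Ico (x₂-1) x₂, haux s (x - y))
          ≤ ∫ _y in Ico (x₂-1) x₂, Faux s ((x₂-1) - x) := by
        apply setIntegral_mono_on (hs_int x).integrableOn
          (integrableOn_const (by rw [Real.volume_Ico]; exact ENNReal.ofReal_ne_top))
          measurableSet_Ico
        intro y hy
        apply haux_le_Faux hs0 h1lt
        calc (x₂-1) - x ≤ y - x := by linarith [hy.1]
          _ ≤ |y - x| := le_abs_self _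
          _ = |x - y| := abs_sub_comm y x
      rw [setIntegral_const, Real.volume_real_Ico_of_le (show x₂ - 1 ≤ x₂ by linarith),
        show x₂ - (x₂-1) = 1 by ring, one_smul] at h3
      have h2 : 0 ≤ C₀ * (Ico (x₂-2) x₂).indicator (fun _ => (1:ℝ)) x :=
        mul_nonneg hC₀pos.le (Set.indicator_nonneg (fun _ _ => zero_le_one) x)
      linarith
  have hIfin : volume I < ⊤ := measure_Ioo_lt_top
  have he_int : IntegrableOn e I := by
    apply Integrable.mono' (g := fun _ => (1:ℝ)) (integrableOn_const hIfin.ne)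
      ((measurable_const.indicator hBmeas).aestronglyMeasurable)
    apply Filter.Eventually.of_forall
    intro z
    rw [Real.norm_eq_abs]
    by_cases hzB : z ∈ B <;>
      simp [hedef, Set.indicator_of_mem, Set.indicator_of_notMem, hzB]
  have hφ₁_int : Integrable
      (fun x => C₀ * (Ioc x₁ (x₁+2)).indicator (fun _ => (1:ℝ)) x + Faux s (x - (x₁+1))) := by
    apply Integrable.add
    · apply Integrable.const_mul
      rw [integrable_indicator_iff measurableSet_Ioc]
      exact integrableOn_const (by rw [Real.volume_Ioc]; exact ENNReal.ofReal_ne_top)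
    · exact (Faux_integrable hs0).comp_sub_right (x₁+1)
  have hφ₂_int : Integrable
      (fun x => C₀ * (Ico (x₂-2) x₂).indicator (fun _ => (1:ℝ)) x + Faux s ((x₂-1) - x)) := by
    apply Integrable.add
    · apply Integrable.const_mul
      rw [integrable_indicator_iff measurableSet_Ico]
      exact integrableOn_const (by rw [Real.volume_Ico]; exact ENNReal.ofReal_ne_top)
    · exact (Faux_integrable hs0).comp_sub_left (x₂-1)
  have houter : (∫ x in I, ∫ y in I, (P x - P y)^2 * K (x - y))
      ≤ ∫ x in I, (Θ₀*ρ^2) * (C₀ * e x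
          + ((C₀ * (Ioc x₁ (x₁+2)).indicator (fun _ => (1:ℝ)) x + Faux s (x - (x₁+1)))
            + (C₀ * (Ico (x₂-2) x₂).indicator (fun _ => (1:ℝ)) x + Faux s ((x₂-1) - x)))) := by
    apply integral_mono_of_nonneg
    · exact Filter.Eventually.of_forall fun x =>
        integral_nonneg fun y => mul_nonneg (sq_nonneg _) (hKnn _)
    · exact (((he_int.const_mul C₀).add
        (hφ₁_int.integrableOn.add hφ₂_int.integrableOn)).const_mul _)
    · filter_upwards [ae_restrict_mem hImeas] with x hxI
      refine le_trans (innerB x hxI) ?_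
      have h1 := hφ₁ x hxI
      have h2 := hφ₂ x hxI
      apply mul_le_mul_of_nonneg_left _ (by positivity : (0:ℝ) ≤ Θ₀ * ρ^2)
      linarith
  have hval : (∫ x in I, (Θ₀*ρ^2) * (C₀ * e x
          + ((C₀ * (Ioc x₁ (x₁+2)).indicator (fun _ => (1:ℝ)) x + Faux s (x - (x₁+1)))
            + (C₀ * (Ico (x₂-2) x₂).indicator (fun _ => (1:ℝ)) x + Faux s ((x₂-1) - x)))))
      = (Θ₀*ρ^2) * (C₀ * (∫ x in I, e x)
          + ((∫ x in I, (C₀ * (Ioc x₁ (x₁+2)).indicator (fun _ => (1:ℝ)) x + Faux s (x - (x₁+1))))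
            + ∫ x in I, (C₀ * (Ico (x₂-2) x₂).indicator (fun _ => (1:ℝ)) x
                + Faux s ((x₂-1) - x)))) := by
    have hg' : Integrable (fun x =>
        (C₀ * (Ioc x₁ (x₁+2)).indicator (fun _ => (1:ℝ)) x + Faux s (x - (x₁+1)))
          + (C₀ * (Ico (x₂-2) x₂).indicator (fun _ => (1:ℝ)) x + Faux s ((x₂-1) - x)))
        (volume.restrict I) := hφ₁_int.integrableOn.add hφ₂_int.integrableOn
    rw [integral_const_mul, integral_add (he_int.const_mul C₀) hg',
      integral_add hφ₁_int.integrableOn hφ₂_int.integrableOn, integral_const_mul]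
  have hE : (∫ x in I, e x) ≤ 2 := by
    have h1 : (∫ x in I, e x) = ∫ x in I ∩ B, (1:ℝ) := by
      simp only [hedef]
      rw [setIntegral_indicator hBmeas]
    rw [h1, hIB, setIntegral_union hJdisj measurableSet_Ico
      (integrableOn_const (by rw [Real.volume_Ioc]; exact ENNReal.ofReal_ne_top))
      (integrableOn_const (by rw [Real.volume_Ico]; exact ENNReal.ofReal_ne_top)),
      setIntegral_const, setIntegral_const,
      Real.volume_real_Ioc_of_le (show x₁ ≤ x₁ + 1 by linarith),
      Real.volume_real_Ico_of_le (show x₂ - 1 ≤ x₂ by linarith),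
      show x₁ + 1 - x₁ = 1 by ring, show x₂ - (x₂-1) = 1 by ring]
    norm_num
  have hF1 : (∫ x in I, (C₀ * (Ioc x₁ (x₁+2)).indicator (fun _ => (1:ℝ)) x
      + Faux s (x - (x₁+1)))) ≤ 2*C₀ + 2/s := by
    have hnn : ∀ x : ℝ, 0 ≤ C₀ * (Ioc x₁ (x₁+2)).indicator (fun _ => (1:ℝ)) x
        + Faux s (x - (x₁+1)) := fun x =>
      add_nonneg (mul_nonneg hC₀pos.le (Set.indicator_nonneg (fun _ _ => zero_le_one) x))
        (Faux_nonneg s _)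
    calc (∫ x in I, (C₀ * (Ioc x₁ (x₁+2)).indicator (fun _ => (1:ℝ)) x + Faux s (x - (x₁+1))))
        ≤ ∫ x, (C₀ * (Ioc x₁ (x₁+2)).indicator (fun _ => (1:ℝ)) x + Faux s (x - (x₁+1))) :=
          setIntegral_le_integral hφ₁_int (Filter.Eventually.of_forall hnn)
      _ = 2*C₀ + 2/s := by
          rw [integral_add ((((integrable_indicator_iff measurableSet_Ioc).mpr
              (integrableOn_const (by rw [Real.volume_Ioc]; exact
                ENNReal.ofReal_ne_top)))).const_mul C₀)
            ((Faux_integrable hs0).comp_sub_right (x₁+1)),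
            integral_const_mul, integral_indicator measurableSet_Ioc, setIntegral_const,
            integral_sub_right_eq_self (Faux s) (x₁+1), Faux_integral hs0,
            Real.volume_real_Ioc_of_le (show x₁ ≤ x₁ + 2 by linarith), show x₁ + 2 - x₁ = 2 by ring]
          norm_num
          ring
  have hF2 : (∫ x in I, (C₀ * (Ico (x₂-2) x₂).indicator (fun _ => (1:ℝ)) x
      + Faux s ((x₂-1) - x))) ≤ 2*C₀ + 2/s := by
    have hnn : ∀ x : ℝ, 0 ≤ C₀ * (Ico (x₂-2) x₂).indicator (fun _ => (1:ℝ)) x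
        + Faux s ((x₂-1) - x) := fun x =>
      add_nonneg (mul_nonneg hC₀pos.le (Set.indicator_nonneg (fun _ _ => zero_le_one) x))
        (Faux_nonneg s _)
    calc (∫ x in I, (C₀ * (Ico (x₂-2) x₂).indicator (fun _ => (1:ℝ)) x + Faux s ((x₂-1) - x)))
        ≤ ∫ x, (C₀ * (Ico (x₂-2) x₂).indicator (fun _ => (1:ℝ)) x + Faux s ((x₂-1) - x)) :=
          setIntegral_le_integral hφ₂_int (Filter.Eventually.of_forall hnn)
      _ = 2*C₀ + 2/s := by
          rw [integral_add ((((integrable_indicator_iff measurableSet_Ico).mpr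
              (integrableOn_const (by rw [Real.volume_Ico]; exact
                ENNReal.ofReal_ne_top)))).const_mul C₀)
            ((Faux_integrable hs0).comp_sub_left (x₂-1)),
            integral_const_mul, integral_indicator measurableSet_Ico, setIntegral_const,
            integral_sub_left_eq_self (Faux s) _ (x₂-1), Faux_integral hs0,
            Real.volume_real_Ico_of_le (show x₂ - 2 ≤ x₂ by linarith), show x₂ - (x₂-2) = 2 by ring]
          norm_num
          ring
  refine le_trans houter ?_
  rw [hval]
  have hfinal : C₀ * (∫ x in I, e x)
      + (((∫ x in I, (C₀ * (Ioc x₁ (x₁+2)).indicator (fun _ => (1:ℝ)) x + Faux s (x - (x₁+1)))))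
        + ∫ x in I, (C₀ * (Ico (x₂-2) x₂).indicator (fun _ => (1:ℝ)) x + Faux s ((x₂-1) - x)))
      ≤ C₀ * 2 + ((2*C₀ + 2/s) + (2*C₀ + 2/s)) := by
    have := mul_le_mul_of_nonneg_left hE hC₀pos.le
    linarith
  calc (Θ₀*ρ^2) * (C₀ * (∫ x in I, e x)
      + (((∫ x in I, (C₀ * (Ioc x₁ (x₁+2)).indicator (fun _ => (1:ℝ)) x + Faux s (x - (x₁+1)))))
        + ∫ x in I, (C₀ * (Ico (x₂-2) x₂).indicator (fun _ => (1:ℝ)) x + Faux s ((x₂-1) - x))))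
      ≤ (Θ₀*ρ^2) * (C₀ * 2 + ((2*C₀ + 2/s) + (2*C₀ + 2/s))) :=
        mul_le_mul_of_nonneg_left hfinal (by positivity)
    _ = Θ₀ * (6*C₀ + 4/s) * ρ^2 := by ring
end

section
/- Let W : ℝ → ℝ be continuous with W(x) ≥ c₀ ρ² for all x with dist(x, Z) ≥ ρ/2 (where Z ⊂ ℝ is a closed set and ρ ∈ (0,1)), and let a(x) ≥ a̲ > 0. Let Q : ℝ → ℝ be α-Hölder continuous with seminorm M on an interval J, and suppose there is p ∈ J with dist(Q(p), Z) > ρ. Set ℓ := (ρ/(2M))^{1/α}. Then for all x ∈ [p − ℓ, p + ℓ] ∩ J one has dist(Q(x), Z) > ρ/2, and consequently ∫_{[p−ℓ, p+ℓ] ∩ J} a(x) W(Q(x)) dx ≥ a̲ c₀ ρ² · |[p−ℓ,p+ℓ] ∩ J|. -/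
open MeasureTheory Set Metric

/-- Energy cost of non-cleanness: if `Q` is `α`-Hölder with constant `M` on `J`, `W ≥ c₀ρ²`
wherever `dist(·,Z) ≥ ρ/2`, `a ≥ a̲ > 0`, and `dist(Q(p), Z) > ρ` at some `p ∈ J`, then with
`ℓ = (ρ/(2M))^{1/α}` one has `dist(Q(x), Z) > ρ/2` on `[p-ℓ, p+ℓ] ∩ J`, and hence
`∫_{[p-ℓ,p+ℓ]∩J} a W(Q) ≥ a̲ c₀ ρ² |[p-ℓ,p+ℓ] ∩ J|`. -/
theorem stmt_17 (W : ℝ → ℝ) (hWc : Continuous W) (Z : Set ℝ) (hZ : IsClosed Z)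
    (ρ c₀ : ℝ) (hρ : ρ ∈ Set.Ioo (0:ℝ) 1) (hc₀ : 0 < c₀)
    (hW : ∀ x : ℝ, ρ / 2 ≤ Metric.infDist x Z → c₀ * ρ ^ 2 ≤ W x)
    (a : ℝ → ℝ) (abar : ℝ) (habar : 0 < abar) (ha : ∀ x, abar ≤ a x)
    (J : Set ℝ) (hJ : MeasurableSet J)
    (Q : ℝ → ℝ) (M α : ℝ) (hM : 0 < M) (hα : α ∈ Set.Ioc (0:ℝ) 1)
    (hQ : ∀ x ∈ J, ∀ y ∈ J, |Q x - Q y| ≤ M * |x - y| ^ α)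
    (p : ℝ) (hp : p ∈ J) (hdist : ρ < Metric.infDist (Q p) Z)
    (hint : IntegrableOn (fun x => a x * W (Q x))
      (Set.Icc (p - (ρ / (2 * M)) ^ (1 / α)) (p + (ρ / (2 * M)) ^ (1 / α)) ∩ J)) :
    (∀ x ∈ Set.Icc (p - (ρ / (2 * M)) ^ (1 / α)) (p + (ρ / (2 * M)) ^ (1 / α)) ∩ J,
        ρ / 2 < Metric.infDist (Q x) Z)
    ∧ abar * c₀ * ρ ^ 2 *
        (volume (Set.Icc (p - (ρ / (2 * M)) ^ (1 / α)) (p + (ρ / (2 * M)) ^ (1 / α)) ∩ J)).toReal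
      ≤ ∫ x in Set.Icc (p - (ρ / (2 * M)) ^ (1 / α)) (p + (ρ / (2 * M)) ^ (1 / α)) ∩ J,
          a x * W (Q x) := by
  obtain ⟨hρ0, hρ1⟩ := hρ
  obtain ⟨hα0, hα1⟩ := hα
  set ℓ : ℝ := (ρ / (2 * M)) ^ (1 / α) with hℓ
  have hbase : (0:ℝ) < ρ / (2 * M) := div_pos hρ0 (by linarith)
  have hℓpos : 0 < ℓ := Real.rpow_pos_of_pos hbase _
  have hℓα : ℓ ^ α = ρ / (2 * M) := by
    rw [hℓ, ← Real.rpow_mul hbase.le, one_div_mul_cancel (ne_of_gt hα0), Real.rpow_one]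
  have key : ∀ x ∈ Set.Icc (p - ℓ) (p + ℓ) ∩ J, ρ / 2 < Metric.infDist (Q x) Z := by
    intro x hx
    obtain ⟨⟨hx1, hx2⟩, hxJ⟩ := hx
    have habs : |x - p| ≤ ℓ := abs_sub_le_iff.2 ⟨by linarith, by linarith⟩
    have h1 : |x - p| ^ α ≤ ℓ ^ α :=
      Real.rpow_le_rpow (abs_nonneg _) habs hα0.le
    have h2 : |Q x - Q p| ≤ ρ / 2 := by
      calc |Q x - Q p| ≤ M * |x - p| ^ α := hQ x hxJ p hp
        _ ≤ M * (ρ / (2 * M)) := by rw [← hℓα]; exact mul_le_mul_of_nonneg_left h1 hM.le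
        _ = ρ / 2 := by field_simp
    have hlip : Metric.infDist (Q p) Z ≤ Metric.infDist (Q x) Z + dist (Q p) (Q x) :=
      Metric.infDist_le_infDist_add_dist
    rw [Real.dist_eq, abs_sub_comm] at hlip
    linarith [le_abs_self (Q x - Q p), neg_abs_le (Q x - Q p)]
  refine ⟨key, ?_⟩
  have hWlb : ∀ x ∈ Set.Icc (p - ℓ) (p + ℓ) ∩ J, abar * c₀ * ρ ^ 2 ≤ a x * W (Q x) := by
    intro x hx
    have h1 : c₀ * ρ ^ 2 ≤ W (Q x) := hW _ (key x hx).le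
    have h2 : 0 < c₀ * ρ ^ 2 := mul_pos hc₀ (by positivity)
    calc abar * c₀ * ρ ^ 2 = abar * (c₀ * ρ ^ 2) := by ring
      _ ≤ a x * W (Q x) := mul_le_mul (ha x) h1 h2.le (le_trans habar.le (ha x))
  have hmeas : MeasurableSet (Set.Icc (p - ℓ) (p + ℓ) ∩ J) := measurableSet_Icc.inter hJ
  have hfin : volume (Set.Icc (p - ℓ) (p + ℓ) ∩ J) ≠ ⊤ :=
    ne_top_of_le_ne_top measure_Icc_lt_top.ne (measure_mono Set.inter_subset_left)
  have h := MeasureTheory.setIntegral_ge_of_const_le hmeas hfin hWlb hint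
  rw [smul_eq_mul, mul_comm] at h
  exact h
end
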